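/- Let g ≥ 0, c̄ > 0, and g12 > g + 1/c̄, and set σ_c = (g12 − g − 1/c̄)²/8. Then for every σ > σ_c and every real k ≠ 0, the 2×2 symmetric real matrix with both diagonal entries equal to σ·k⁴ + (g + 1/c̄)·k² + 1 and both off-diagonal entries equal to g12·k² − 1 is positive definite. -/

import Mathlib

/-- Section 5.2 of the paper (symmetric case): above the instability onset `σ > σ_c`, the
matrix `−M(k)·diag(c̄, c̄)⁻¹`, where `M(k)` is the linearization of the PNP–Cahn–Hilliard
system about the homogeneous state, is positive definite for every wavenumber `k ≠ 0`;
hence the homogeneous state is linearly stable. -/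
theorem stmt15 (g cbar g12 : ℝ)
    (hg : 0 ≤ g) (hcbar : 0 < cbar) (hg12 : g + 1 / cbar < g12)
    (σc : ℝ) (hσc : σc = (g12 - g - 1 / cbar) ^ 2 / 8) :
    ∀ σ : ℝ, σc < σ → ∀ k : ℝ, k ≠ 0 →
      (!![σ * k ^ 4 + (g + 1 / cbar) * k ^ 2 + 1, g12 * k ^ 2 - 1;
          g12 * k ^ 2 - 1, σ * k ^ 4 + (g + 1 / cbar) * k ^ 2 + 1] :
        Matrix (Fin 2) (Fin 2) ℝ).PosDef := by
  intro σ hσ k hk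
  set a : ℝ := σ * k ^ 4 + (g + 1 / cbar) * k ^ 2 + 1 with ha
  set b : ℝ := g12 * k ^ 2 - 1 with hb
  have hkk : 0 < k ^ 2 := by positivity
  have hk4 : 0 < k ^ 4 := by positivity
  have hcinv : 0 < 1 / cbar := by positivity
  have hσpos : 0 < σ := by nlinarith [sq_nonneg (g12 - g - 1 / cbar)]
  have hd : (g12 - g - 1 / cbar) ^ 2 < 8 * σ := by nlinarith
  have h1 : 0 < a + b := by
    rw [ha, hb]
    have hsum : 0 < g + 1 / cbar + g12 := by linarith
    nlinarith [mul_pos hσpos hk4, mul_pos hsum hkk]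
  have h2 : 0 < a - b := by
    rw [ha, hb]
    nlinarith [sq_nonneg (2 * σ * k ^ 2 - (g12 - g - 1 / cbar)), hd, hσpos]
  constructor
  · show Matrix.conjTranspose _ = _
    ext i j
    fin_cases i <;> fin_cases j <;> rfl
  · intro x hx
    have hx01 : x 0 ≠ 0 ∨ x 1 ≠ 0 := by
      by_contra h
      push_neg at h
      exact hx (by ext i; fin_cases i <;> simp [h.1, h.2])
    have hs : 0 < x 0 ^ 2 + x 1 ^ 2 := by
      rcases hx01 with h | h
      · have : 0 < x 0 ^ 2 := by positivity
        nlinarith [sq_nonneg (x 1)]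
      · have : 0 < x 1 ^ 2 := by positivity
        nlinarith [sq_nonneg (x 0)]
    have hquad : 0 < x 0 * (a * x 0 + b * x 1) + x 1 * (b * x 0 + a * x 1) := by
      rcases le_or_gt 0 (x 0 * x 1) with hp | hp
      · nlinarith [mul_pos h1 hs, mul_nonneg h2.le (sq_nonneg (x 0 - x 1)),
          mul_nonneg h1.le hp]
      · nlinarith [mul_pos h2 hs, mul_nonneg h1.le (sq_nonneg (x 0 + x 1)),
          mul_nonneg h2.le (le_of_lt (neg_pos.mpr hp))]
    simp [Finsupp.sum_fintype, Matrix.mulVec, dotProduct, Fin.sum_univ_two]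
    nlinarith [hquad]
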